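/- arXiv:1105.0629 — 4 statements merged into one kernel-verified Lean document; each statement's English description precedes it below -/
import Mathlib

section
/- Let ν, κ, λ be real constants with λ ≠ 0, and let f : ℝ × ℝ × ℝ → ℝ be a four times continuously differentiable solution of the (2+1)-dimensional Kuramoto–Sivashinsky equation. Then for every s ∈ ℝ the Galilean-boosted function (x,y,t) ↦ f(x + s·t, y, t) + (2·x·s + t·s²)/(4λ) is again a solution of the Kuramoto–Sivashinsky equation. (Invariance under the one-parameter group G₆ generated by the Galilean boost V₆ = t∂ₓ + (x/(2λ))∂ₕ.) -/
noncomputable section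

/-- Partial derivative in the first (x) variable. -/
def Dx (h : ℝ × ℝ × ℝ → ℝ) : ℝ × ℝ × ℝ → ℝ :=
  fun p => deriv (fun x : ℝ => h (x, p.2.1, p.2.2)) p.1

/-- Partial derivative in the second (y) variable. -/
def Dy (h : ℝ × ℝ × ℝ → ℝ) : ℝ × ℝ × ℝ → ℝ :=
  fun p => deriv (fun y : ℝ => h (p.1, y, p.2.2)) p.2.1

/-- Partial derivative in the third (t) variable. -/
def Dt (h : ℝ × ℝ × ℝ → ℝ) : ℝ × ℝ × ℝ → ℝ :=
  fun p => deriv (fun t : ℝ => h (p.1, p.2.1, t)) p.2.2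

/-- The left-hand side of the (2+1)-dimensional Kuramoto–Sivashinsky equation:
∂ₜh + ν(∂ₓₓh + ∂ᵧᵧh) + κ(∂ₓₓₓₓh + 2∂ₓₓᵧᵧh + ∂ᵧᵧᵧᵧh) − λ((∂ₓh)² + (∂ᵧh)²). -/
def KSLhs (ν κ lam : ℝ) (h : ℝ × ℝ × ℝ → ℝ) : ℝ × ℝ × ℝ → ℝ :=
  fun p =>
    Dt h p + ν * (Dx (Dx h) p + Dy (Dy h) p)
      + κ * (Dx (Dx (Dx (Dx h))) p + 2 * Dx (Dx (Dy (Dy h))) p + Dy (Dy (Dy (Dy h))) p)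
      - lam * ((Dx h p) ^ 2 + (Dy h p) ^ 2)

/-- A C⁴ solution of the (2+1)-dimensional Kuramoto–Sivashinsky equation. -/
def IsKSSolution (ν κ lam : ℝ) (h : ℝ × ℝ × ℝ → ℝ) : Prop :=
  ContDiff ℝ 4 h ∧ ∀ p : ℝ × ℝ × ℝ, KSLhs ν κ lam h p = 0

/-- x-derivative commutes with the Galilean shift of the space variable. -/
lemma Dx_shift (h : ℝ × ℝ × ℝ → ℝ) (s : ℝ) :
    Dx (fun p => h (p.1 + s * p.2.2, p.2.1, p.2.2))
      = fun p => Dx h (p.1 + s * p.2.2, p.2.1, p.2.2) := by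
  funext p
  simp only [Dx]
  exact deriv_comp_add_const (fun x => h (x, p.2.1, p.2.2)) (s * p.2.2) p.1

/-- y-derivative commutes with the Galilean shift of the space variable. -/
lemma Dy_shift (h : ℝ × ℝ × ℝ → ℝ) (s : ℝ) :
    Dy (fun p => h (p.1 + s * p.2.2, p.2.1, p.2.2))
      = fun p => Dy h (p.1 + s * p.2.2, p.2.1, p.2.2) := rfl

/-- x-derivative commutes with shift plus an additive constant. -/
lemma Dx_shift_add_const (h : ℝ × ℝ × ℝ → ℝ) (s c : ℝ) :
    Dx (fun p => h (p.1 + s * p.2.2, p.2.1, p.2.2) + c)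
      = fun p => Dx h (p.1 + s * p.2.2, p.2.1, p.2.2) := by
  funext p
  show deriv (fun x => h (x + s * p.2.2, p.2.1, p.2.2) + c) p.1 = _
  rw [deriv_add_const]
  exact deriv_comp_add_const (fun x => h (x, p.2.1, p.2.2)) (s * p.2.2) p.1

lemma hasDerivAt_x (f : ℝ × ℝ × ℝ → ℝ) (p : ℝ × ℝ × ℝ) (hf : DifferentiableAt ℝ f p) :
    HasDerivAt (fun x => f (x, p.2.1, p.2.2)) (fderiv ℝ f p (1, 0, 0)) p.1 := by
  have hc : HasDerivAt (fun x : ℝ => ((x, p.2.1, p.2.2) : ℝ × ℝ × ℝ))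
      ((1 : ℝ), (0 : ℝ), (0 : ℝ)) p.1 :=
    (hasDerivAt_id p.1).prodMk (hasDerivAt_const p.1 (p.2.1, p.2.2))
  exact hf.hasFDerivAt.comp_hasDerivAt p.1 hc

lemma hasDerivAt_t (f : ℝ × ℝ × ℝ → ℝ) (p : ℝ × ℝ × ℝ) (hf : DifferentiableAt ℝ f p) :
    HasDerivAt (fun t => f (p.1, p.2.1, t)) (fderiv ℝ f p (0, 0, 1)) p.2.2 := by
  have hc : HasDerivAt (fun t : ℝ => ((p.1, p.2.1, t) : ℝ × ℝ × ℝ))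
      ((0 : ℝ), (0 : ℝ), (1 : ℝ)) p.2.2 :=
    (hasDerivAt_const p.2.2 p.1).prodMk
      ((hasDerivAt_const p.2.2 p.2.1).prodMk (hasDerivAt_id p.2.2))
  exact hf.hasFDerivAt.comp_hasDerivAt p.2.2 hc

/-- Invariance of the K-S solution set under the Galilean boost group G₆ generated by
V₆ = t∂ₓ + (x/(2λ))∂ₕ. -/
theorem ks_invariance_G6 (ν κ lam : ℝ) (hlam : lam ≠ 0) (f : ℝ × ℝ × ℝ → ℝ)
    (hf : IsKSSolution ν κ lam f) (s : ℝ) :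
    IsKSSolution ν κ lam
      (fun p => f (p.1 + s * p.2.2, p.2.1, p.2.2)
        + (2 * p.1 * s + p.2.2 * s ^ 2) / (4 * lam)) := by
  obtain ⟨hC, hE⟩ := hf
  have hD : Differentiable ℝ f := hC.differentiable (by norm_num)
  set g : ℝ × ℝ × ℝ → ℝ := fun p => f (p.1 + s * p.2.2, p.2.1, p.2.2)
      + (2 * p.1 * s + p.2.2 * s ^ 2) / (4 * lam) with hg
  -- first-order facts
  have F2 : Dx g = fun p => Dx f (p.1 + s * p.2.2, p.2.1, p.2.2) + s / (2 * lam) := by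
    funext p
    show deriv (fun x => f (x + s * p.2.2, p.2.1, p.2.2)
        + (2 * x * s + p.2.2 * s ^ 2) / (4 * lam)) p.1 = _
    have h1 : HasDerivAt (fun x : ℝ => f (x + s * p.2.2, p.2.1, p.2.2))
        (Dx f (p.1 + s * p.2.2, p.2.1, p.2.2)) p.1 := by
      have hbase : HasDerivAt (fun x => f (x, p.2.1, p.2.2))
          (Dx f (p.1 + s * p.2.2, p.2.1, p.2.2)) (p.1 + s * p.2.2) :=
        ((hasDerivAt_x f (p.1 + s * p.2.2, p.2.1, p.2.2)
          (hD _)).differentiableAt).hasDerivAt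
      exact hbase.comp_add_const
    have h2 : HasDerivAt (fun x : ℝ => (2 * x * s + p.2.2 * s ^ 2) / (4 * lam))
        (s / (2 * lam)) p.1 := by
      have h := ((((hasDerivAt_id p.1).const_mul 2).mul_const s).add_const
          (p.2.2 * s ^ 2)).div_const (4 * lam)
      exact h.congr_deriv (by ring)
    exact (h1.add h2).deriv
  have F1 : Dy g = fun p => Dy f (p.1 + s * p.2.2, p.2.1, p.2.2) := by
    funext p
    show deriv (fun y => f (p.1 + s * p.2.2, y, p.2.2)
        + (2 * p.1 * s + p.2.2 * s ^ 2) / (4 * lam)) p.2.1 = _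
    rw [deriv_add_const]
    rfl
  have F3 : ∀ p : ℝ × ℝ × ℝ, Dt g p
      = Dt f (p.1 + s * p.2.2, p.2.1, p.2.2)
        + s * Dx f (p.1 + s * p.2.2, p.2.1, p.2.2) + s ^ 2 / (4 * lam) := by
    intro p
    show deriv (fun t => f (p.1 + s * t, p.2.1, t)
        + (2 * p.1 * s + t * s ^ 2) / (4 * lam)) p.2.2 = _
    have hγ : HasDerivAt (fun t : ℝ => ((p.1 + s * t, p.2.1, t) : ℝ × ℝ × ℝ))
        ((s : ℝ), (0 : ℝ), (1 : ℝ)) p.2.2 := by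
      have h1 : HasDerivAt (fun t : ℝ => p.1 + s * t) s p.2.2 := by
        simpa using (((hasDerivAt_id p.2.2).const_mul s).const_add p.1)
      exact h1.prodMk ((hasDerivAt_const _ _).prodMk (hasDerivAt_id _))
    have h1 : HasDerivAt (fun t => f (p.1 + s * t, p.2.1, t))
        (fderiv ℝ f (p.1 + s * p.2.2, p.2.1, p.2.2) ((s : ℝ), (0 : ℝ), (1 : ℝ))) p.2.2 :=
      (hD _).hasFDerivAt.comp_hasDerivAt p.2.2 hγ
    have h2 : HasDerivAt (fun t : ℝ => (2 * p.1 * s + t * s ^ 2) / (4 * lam))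
        (s ^ 2 / (4 * lam)) p.2.2 := by
      have h := (((hasDerivAt_id p.2.2).mul_const (s ^ 2)).const_add
          (2 * p.1 * s)).div_const (4 * lam)
      exact h.congr_deriv (by ring)
    have hval : fderiv ℝ f (p.1 + s * p.2.2, p.2.1, p.2.2) ((s : ℝ), (0 : ℝ), (1 : ℝ))
        = Dt f (p.1 + s * p.2.2, p.2.1, p.2.2)
          + s * Dx f (p.1 + s * p.2.2, p.2.1, p.2.2) := by
      have e : ((s : ℝ), (0 : ℝ), (1 : ℝ))
          = s • (((1 : ℝ), (0 : ℝ), (0 : ℝ)) : ℝ × ℝ × ℝ)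
            + (((0 : ℝ), (0 : ℝ), (1 : ℝ)) : ℝ × ℝ × ℝ) := by
        simp [Prod.ext_iff]
      rw [e, map_add, map_smul]
      have hx := (hasDerivAt_x f (p.1 + s * p.2.2, p.2.1, p.2.2) (hD _)).deriv
      have ht := (hasDerivAt_t f (p.1 + s * p.2.2, p.2.1, p.2.2) (hD _)).deriv
      simp only [Dx, Dt]
      rw [← hx, ← ht]
      simp [smul_eq_mul]
      ring
    rw [(h1.fun_add h2).deriv, hval]
  -- higher-order facts
  have G2x : Dx (Dx g) = fun p => Dx (Dx f) (p.1 + s * p.2.2, p.2.1, p.2.2) := by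
    rw [F2, Dx_shift_add_const]
  have G4x : Dx (Dx (Dx (Dx g)))
      = fun p => Dx (Dx (Dx (Dx f))) (p.1 + s * p.2.2, p.2.1, p.2.2) := by
    rw [G2x, Dx_shift, Dx_shift]
  have G2y : Dy (Dy g) = fun p => Dy (Dy f) (p.1 + s * p.2.2, p.2.1, p.2.2) := by
    rw [F1, Dy_shift]
  have G4y : Dy (Dy (Dy (Dy g)))
      = fun p => Dy (Dy (Dy (Dy f))) (p.1 + s * p.2.2, p.2.1, p.2.2) := by
    rw [G2y, Dy_shift, Dy_shift]
  have Gmix : Dx (Dx (Dy (Dy g)))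
      = fun p => Dx (Dx (Dy (Dy f))) (p.1 + s * p.2.2, p.2.1, p.2.2) := by
    rw [G2y, Dx_shift, Dx_shift]
  constructor
  · have h1 : ContDiff ℝ 4 (fun p : ℝ × ℝ × ℝ => f (p.1 + s * p.2.2, p.2.1, p.2.2)) :=
      hC.comp (by fun_prop)
    have h2 : ContDiff ℝ 4
        (fun p : ℝ × ℝ × ℝ => (2 * p.1 * s + p.2.2 * s ^ 2) / (4 * lam)) :=
      ContDiff.div_const (by fun_prop) _
    exact h1.add h2
  · intro p
    have h0 := hE (p.1 + s * p.2.2, p.2.1, p.2.2)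
    simp only [KSLhs] at h0 ⊢
    rw [F3 p]
    simp only [G4x]
    simp only [Gmix]
    simp only [G4y]
    simp only [G2x]
    simp only [G2y]
    simp only [F2]
    simp only [F1]
    have h0' : Dt f (p.1 + s * p.2.2, p.2)
        + ν * (Dx (Dx f) (p.1 + s * p.2.2, p.2) + Dy (Dy f) (p.1 + s * p.2.2, p.2))
        + κ * (Dx (Dx (Dx (Dx f))) (p.1 + s * p.2.2, p.2)
            + 2 * Dx (Dx (Dy (Dy f))) (p.1 + s * p.2.2, p.2)
            + Dy (Dy (Dy (Dy f))) (p.1 + s * p.2.2, p.2))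
        - lam * ((Dx f (p.1 + s * p.2.2, p.2)) ^ 2 + (Dy f (p.1 + s * p.2.2, p.2)) ^ 2) = 0 := h0
    field_simp
    linear_combination (16 * lam) * h0'
end
end

section
/- Let ν, κ, λ be real constants with λ ≠ 0, and let f : ℝ × ℝ × ℝ → ℝ be a four times continuously differentiable solution of the (2+1)-dimensional Kuramoto–Sivashinsky equation. Then for every s ∈ ℝ the Galilean-boosted function (x,y,t) ↦ f(x, y + s·t, t) + (2·y·s + t·s²)/(4λ) is again a solution of the Kuramoto–Sivashinsky equation. (Invariance under the one-parameter group G₇ generated by the Galilean boost V₇ = t∂ᵧ + (y/(2λ))∂ₕ.) -/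
noncomputable section

/-- `Dx` of a Galilean-shifted function is the shift of `Dx` (unconditional). -/
lemma Dx_comp_shift (u : ℝ × ℝ × ℝ → ℝ) (s : ℝ) :
    Dx (fun q => u (q.1, q.2.1 + s * q.2.2, q.2.2))
      = fun p => Dx u (p.1, p.2.1 + s * p.2.2, p.2.2) := by
  funext p
  rfl

/-- `Dy` of a Galilean-shifted function is the shift of `Dy` (unconditional). -/
lemma Dy_comp_shift (u : ℝ × ℝ × ℝ → ℝ) (s : ℝ) :
    Dy (fun q => u (q.1, q.2.1 + s * q.2.2, q.2.2))
      = fun p => Dy u (p.1, p.2.1 + s * p.2.2, p.2.2) := by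
  funext p
  simp only [Dy]
  exact deriv_comp_add_const (fun y => u (p.1, y, p.2.2)) (s * p.2.2) p.2.1

/-- `Dy` of a shifted function plus a constant (unconditional). -/
lemma Dy_comp_shift_add_const (u : ℝ × ℝ × ℝ → ℝ) (s c : ℝ) :
    Dy (fun q => u (q.1, q.2.1 + s * q.2.2, q.2.2) + c)
      = fun p => Dy u (p.1, p.2.1 + s * p.2.2, p.2.2) := by
  funext p
  simp only [Dy]
  rw [deriv_add_const]
  exact deriv_comp_add_const (fun y => u (p.1, y, p.2.2)) (s * p.2.2) p.2.1

/-- At a point of differentiability, `Dy` is the directional derivative in direction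
`(0,1,0)`. -/
lemma hasDerivAt_Dy (f : ℝ × ℝ × ℝ → ℝ) (q : ℝ × ℝ × ℝ)
    (hd : DifferentiableAt ℝ f q) :
    fderiv ℝ f q ((0 : ℝ), (1 : ℝ), (0 : ℝ)) = Dy f q := by
  have hline : HasDerivAt (fun y : ℝ => (q.1, y, q.2.2)) ((0 : ℝ), (1 : ℝ), (0 : ℝ)) q.2.1 :=
    (hasDerivAt_const _ _).prodMk ((hasDerivAt_id _).prodMk (hasDerivAt_const _ _))
  have h2 := (hd.hasFDerivAt.comp_hasDerivAt q.2.1 hline).deriv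
  simpa [Function.comp_def, Dy] using h2.symm

/-- At a point of differentiability, `Dt` is the directional derivative in direction
`(0,0,1)`. -/
lemma hasDerivAt_Dt (f : ℝ × ℝ × ℝ → ℝ) (q : ℝ × ℝ × ℝ)
    (hd : DifferentiableAt ℝ f q) :
    fderiv ℝ f q ((0 : ℝ), (0 : ℝ), (1 : ℝ)) = Dt f q := by
  have hline : HasDerivAt (fun t : ℝ => (q.1, q.2.1, t)) ((0 : ℝ), (0 : ℝ), (1 : ℝ)) q.2.2 :=
    (hasDerivAt_const _ _).prodMk ((hasDerivAt_const _ _).prodMk (hasDerivAt_id _))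
  have h2 := (hd.hasFDerivAt.comp_hasDerivAt q.2.2 hline).deriv
  simpa [Function.comp_def, Dt] using h2.symm

/-- Invariance of the K-S solution set under the Galilean boost group G₇ generated by
V₇ = t∂ᵧ + (y/(2λ))∂ₕ. -/
theorem ks_invariance_G7 (ν κ lam : ℝ) (hlam : lam ≠ 0) (f : ℝ × ℝ × ℝ → ℝ)
    (hf : IsKSSolution ν κ lam f) (s : ℝ) :
    IsKSSolution ν κ lam
      (fun p => f (p.1, p.2.1 + s * p.2.2, p.2.2)
        + (2 * p.2.1 * s + p.2.2 * s ^ 2) / (4 * lam)) := by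
  obtain ⟨hf4, hfeq⟩ := hf
  have hfd : Differentiable ℝ f := hf4.differentiable (by norm_num)
  set g : ℝ × ℝ × ℝ → ℝ := fun p => f (p.1, p.2.1 + s * p.2.2, p.2.2)
        + (2 * p.2.1 * s + p.2.2 * s ^ 2) / (4 * lam) with hg_def
  -- smoothness
  have hφ : ContDiff ℝ 4 (fun p : ℝ × ℝ × ℝ => (p.1, p.2.1 + s * p.2.2, p.2.2)) := by
    fun_prop
  have hg4 : ContDiff ℝ 4 g := by
    apply ContDiff.add (hf4.comp hφ)
    have h : ContDiff ℝ 4 (fun p : ℝ × ℝ × ℝ => 2 * p.2.1 * s + p.2.2 * s ^ 2) := by fun_prop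
    exact h.div_const _
  -- first x-derivative
  have E1 : Dx g = fun p => Dx f (p.1, p.2.1 + s * p.2.2, p.2.2) := by
    funext p
    simp only [Dx, hg_def]
    exact deriv_add_const _
  -- first y-derivative
  have E2 : Dy g = fun p => Dy f (p.1, p.2.1 + s * p.2.2, p.2.2) + s / (2 * lam) := by
    funext p
    have hdline : DifferentiableAt ℝ (fun y : ℝ => f (p.1, y, p.2.2)) (p.2.1 + s * p.2.2) := by
      fun_prop
    have h1 : HasDerivAt (fun y : ℝ => f (p.1, y, p.2.2))
        (Dy f (p.1, p.2.1 + s * p.2.2, p.2.2)) (p.2.1 + s * p.2.2) := hdline.hasDerivAt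
    have h2 : HasDerivAt (fun y : ℝ => f (p.1, y + s * p.2.2, p.2.2))
        (Dy f (p.1, p.2.1 + s * p.2.2, p.2.2)) p.2.1 := by
      have := h1.comp p.2.1 ((hasDerivAt_id p.2.1).add_const (s * p.2.2))
      simpa [Function.comp_def] using this
    have h3 : HasDerivAt (fun y : ℝ => (2 * y * s + p.2.2 * s ^ 2) / (4 * lam))
        (s / (2 * lam)) p.2.1 := by
      have h := ((((hasDerivAt_id p.2.1).const_mul 2).mul_const s).add_const
        (p.2.2 * s ^ 2)).div_const (4 * lam)
      have e : 2 * (1 : ℝ) * s / (4 * lam) = s / (2 * lam) := by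
        field_simp
        ring
      rw [e] at h
      simpa [id] using h
    have h4 := h2.add h3
    simp only [Dy, hg_def]
    exact h4.deriv
  -- second derivatives
  have E3 : Dx (Dx g) = fun p => Dx (Dx f) (p.1, p.2.1 + s * p.2.2, p.2.2) := by
    rw [E1, Dx_comp_shift]
  have E4 : Dy (Dy g) = fun p => Dy (Dy f) (p.1, p.2.1 + s * p.2.2, p.2.2) := by
    rw [E2, Dy_comp_shift_add_const]
  -- fourth derivatives
  have E5 : Dx (Dx (Dx (Dx g))) = fun p => Dx (Dx (Dx (Dx f))) (p.1, p.2.1 + s * p.2.2, p.2.2) := by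
    rw [E3, Dx_comp_shift, Dx_comp_shift]
  have E6 : Dx (Dx (Dy (Dy g))) = fun p => Dx (Dx (Dy (Dy f))) (p.1, p.2.1 + s * p.2.2, p.2.2) := by
    rw [E4, Dx_comp_shift, Dx_comp_shift]
  have E7 : Dy (Dy (Dy (Dy g))) = fun p => Dy (Dy (Dy (Dy f))) (p.1, p.2.1 + s * p.2.2, p.2.2) := by
    rw [E4, Dy_comp_shift, Dy_comp_shift]
  -- time derivative
  have E8 : ∀ p : ℝ × ℝ × ℝ, Dt g p = s * Dy f (p.1, p.2.1 + s * p.2.2, p.2.2)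
      + Dt f (p.1, p.2.1 + s * p.2.2, p.2.2) + s ^ 2 / (4 * lam) := by
    rintro ⟨x, y, t⟩
    have hc : HasDerivAt (fun τ : ℝ => (x, y + s * τ, τ)) ((0 : ℝ), s, (1 : ℝ)) t := by
      have := (hasDerivAt_const t x).prodMk
        ((((hasDerivAt_id t).const_mul s).const_add y).prodMk (hasDerivAt_id t))
      simpa using this
    have h1 : HasDerivAt (fun τ : ℝ => f (x, y + s * τ, τ))
        (fderiv ℝ f (x, y + s * t, t) ((0 : ℝ), s, (1 : ℝ))) t := by
      have := ((hfd (x, y + s * t, t)).hasFDerivAt).comp_hasDerivAt t hc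
      simpa [Function.comp_def] using this
    have hdir : fderiv ℝ f (x, y + s * t, t) ((0 : ℝ), s, (1 : ℝ))
        = s * Dy f (x, y + s * t, t) + Dt f (x, y + s * t, t) := by
      have hsum : ((0 : ℝ), s, (1 : ℝ))
          = s • ((0 : ℝ), (1 : ℝ), (0 : ℝ)) + ((0 : ℝ), (0 : ℝ), (1 : ℝ)) := by
        simp [Prod.ext_iff]
      rw [hsum, map_add, map_smul, hasDerivAt_Dy f _ (hfd _), hasDerivAt_Dt f _ (hfd _)]
      simp [smul_eq_mul]
    have h2 : HasDerivAt (fun τ : ℝ => (2 * y * s + τ * s ^ 2) / (4 * lam))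
        (s ^ 2 / (4 * lam)) t := by
      have := (((hasDerivAt_const t (2 * y * s)).add
        ((hasDerivAt_id t).mul_const (s ^ 2)))).div_const (4 * lam)
      simpa using this
    have h3 := h1.add h2
    have h4 := h3.deriv
    show deriv (fun τ : ℝ => f (x, y + s * τ, τ) + (2 * y * s + τ * s ^ 2) / (4 * lam)) t = _
    rw [hdir] at h4
    exact h4
  -- conclusion
  refine ⟨hg4, ?_⟩
  rintro ⟨x, y, t⟩
  have H := hfeq (x, y + s * t, t)
  simp only [KSLhs] at H ⊢
  rw [E8 (x, y, t), E5, E6, E7, E3, E4, E1, E2]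
  simp only
  have key : s * Dy f (x, y + s * t, t) + s ^ 2 / (4 * lam)
      - lam * ((Dy f (x, y + s * t, t) + s / (2 * lam)) ^ 2 - Dy f (x, y + s * t, t) ^ 2) = 0 := by
    field_simp
    ring
  linear_combination H + key
end
end

section
/- Let ν, κ, λ be real constants and let f : ℝ × ℝ → ℝ, written f(z,w), be four times continuously differentiable and satisfy the similarity-reduced equation ∂_w f + 4νz·∂_z²f + 4ν·∂_z f + 16κz²·∂_z⁴f + 64κz·∂_z³f + 32κ·∂_z²f − 4λz·(∂_z f)² = 0 at every point (z,w) with z ≥ 0. Then the rotationally invariant function h(x,y,t) := f(x² + y², t) is a solution of the (2+1)-dimensional Kuramoto–Sivashinsky equation. (This is the similarity reduction corresponding to the rotation symmetry V₅ = y∂ₓ − x∂ᵧ, with invariants z = x² + y², w = t.) -/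
noncomputable section

/-- Partial derivative in the first (z) variable of a function of (z,w) ∈ ℝ². -/
def Dz (f : ℝ × ℝ → ℝ) : ℝ × ℝ → ℝ :=
  fun q => deriv (fun z : ℝ => f (z, q.2)) q.1

/-- Partial derivative in the second (w) variable of a function of (z,w) ∈ ℝ². -/
def Dw (f : ℝ × ℝ → ℝ) : ℝ × ℝ → ℝ :=
  fun q => deriv (fun w : ℝ => f (q.1, w)) q.2


/-- z-partial as applied Fréchet derivative. -/
def P1 (g : ℝ × ℝ → ℝ) : ℝ × ℝ → ℝ := fun q => fderiv ℝ g q (1, 0)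

/-- w-partial as applied Fréchet derivative. -/
def Pw (g : ℝ × ℝ → ℝ) : ℝ × ℝ → ℝ := fun q => fderiv ℝ g q (0, 1)

lemma P1_contDiff {g : ℝ × ℝ → ℝ} {m n : WithTop ℕ∞} (hg : ContDiff ℝ n g) (h : m + 1 ≤ n) :
    ContDiff ℝ m (P1 g) :=
  (hg.fderiv_right h).clm_apply contDiff_const

lemma Dz_eq {g : ℝ × ℝ → ℝ} (hg : Differentiable ℝ g) : Dz g = P1 g := by
  funext q
  have hc : HasDerivAt (fun z : ℝ => ((z, q.2) : ℝ × ℝ)) ((1, 0) : ℝ × ℝ) q.1 :=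
    (hasDerivAt_id q.1).prodMk (hasDerivAt_const q.1 q.2)
  exact ((hg (q.1, q.2)).hasFDerivAt.comp_hasDerivAt q.1 hc).deriv

lemma Dw_eq {g : ℝ × ℝ → ℝ} (hg : Differentiable ℝ g) : Dw g = Pw g := by
  funext q
  have hc : HasDerivAt (fun w : ℝ => ((q.1, w) : ℝ × ℝ)) ((0, 1) : ℝ × ℝ) q.2 :=
    (hasDerivAt_const q.2 q.1).prodMk (hasDerivAt_id q.2)
  exact ((hg (q.1, q.2)).hasFDerivAt.comp_hasDerivAt q.2 hc).deriv

lemma slice_x {g : ℝ × ℝ → ℝ} (hg : Differentiable ℝ g) (x y t : ℝ) :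
    HasDerivAt (fun x : ℝ => g (x ^ 2 + y ^ 2, t)) (2 * x * P1 g (x ^ 2 + y ^ 2, t)) x := by
  have h1 : HasDerivAt (fun x : ℝ => ((x ^ 2 + y ^ 2, t) : ℝ × ℝ)) ((2 * x, 0) : ℝ × ℝ) x := by
    have hx : HasDerivAt (fun x : ℝ => x ^ 2 + y ^ 2) (2 * x) x := by
      simpa using (hasDerivAt_pow 2 x).add_const (y ^ 2)
    exact hx.prodMk (hasDerivAt_const x t)
  have h2 := (hg (x ^ 2 + y ^ 2, t)).hasFDerivAt.comp_hasDerivAt x h1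
  refine h2.congr_deriv ?_; symm
  show 2 * x * fderiv ℝ g _ (1, 0) = fderiv ℝ g _ (2 * x, 0)
  have hv : ((2 * x, 0) : ℝ × ℝ) = (2 * x) • ((1 : ℝ), (0 : ℝ)) := by simp
  rw [hv, map_smul, smul_eq_mul]

lemma slice_y {g : ℝ × ℝ → ℝ} (hg : Differentiable ℝ g) (x y t : ℝ) :
    HasDerivAt (fun y : ℝ => g (x ^ 2 + y ^ 2, t)) (2 * y * P1 g (x ^ 2 + y ^ 2, t)) y := by
  have h1 : HasDerivAt (fun y : ℝ => ((x ^ 2 + y ^ 2, t) : ℝ × ℝ)) ((2 * y, 0) : ℝ × ℝ) y := by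
    have hy : HasDerivAt (fun y : ℝ => x ^ 2 + y ^ 2) (2 * y) y := by
      simpa using (hasDerivAt_pow 2 y).const_add (x ^ 2)
    exact hy.prodMk (hasDerivAt_const y t)
  have h2 := (hg (x ^ 2 + y ^ 2, t)).hasFDerivAt.comp_hasDerivAt y h1
  refine h2.congr_deriv ?_; symm
  show 2 * y * fderiv ℝ g _ (1, 0) = fderiv ℝ g _ (2 * y, 0)
  have hv : ((2 * y, 0) : ℝ × ℝ) = (2 * y) • ((1 : ℝ), (0 : ℝ)) := by simp
  rw [hv, map_smul, smul_eq_mul]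

lemma slice_t {g : ℝ × ℝ → ℝ} (hg : Differentiable ℝ g) (x y t : ℝ) :
    HasDerivAt (fun t : ℝ => g (x ^ 2 + y ^ 2, t)) (Pw g (x ^ 2 + y ^ 2, t)) t := by
  have h1 : HasDerivAt (fun t : ℝ => ((x ^ 2 + y ^ 2, t) : ℝ × ℝ)) ((0, 1) : ℝ × ℝ) t :=
    (hasDerivAt_const t (x ^ 2 + y ^ 2)).prodMk (hasDerivAt_id t)
  exact (hg (x ^ 2 + y ^ 2, t)).hasFDerivAt.comp_hasDerivAt t h1


/-- Similarity reduction for the rotation V₅ = y∂ₓ − x∂ᵧ (invariants z = x²+y², w = t):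
if f(z,w) is a C⁴ solution of
∂_w f + 4νz ∂_z²f + 4ν ∂_z f + 16κz² ∂_z⁴f + 64κz ∂_z³f + 32κ ∂_z²f − 4λz(∂_z f)² = 0
for z ≥ 0, then h(x,y,t) = f(x²+y²,t) solves the Kuramoto–Sivashinsky equation. -/
theorem ks_similarity_reduction_V5 (ν κ lam : ℝ) (f : ℝ × ℝ → ℝ)
    (hf : ContDiff ℝ 4 f)
    (hred : ∀ q : ℝ × ℝ, 0 ≤ q.1 →
      Dw f q + 4 * ν * q.1 * Dz (Dz f) q + 4 * ν * Dz f q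
        + 16 * κ * q.1 ^ 2 * Dz (Dz (Dz (Dz f))) q
        + 64 * κ * q.1 * Dz (Dz (Dz f)) q + 32 * κ * Dz (Dz f) q
        - 4 * lam * q.1 * (Dz f q) ^ 2 = 0) :
    IsKSSolution ν κ lam (fun p : ℝ × ℝ × ℝ => f (p.1 ^ 2 + p.2.1 ^ 2, p.2.2)) := by
  have d0 : Differentiable ℝ f := hf.differentiable (by norm_num)
  have c1 : ContDiff ℝ 3 (P1 f) := P1_contDiff hf (by norm_num)
  have d1 : Differentiable ℝ (P1 f) := c1.differentiable (by norm_num)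
  have c2 : ContDiff ℝ 2 (P1 (P1 f)) := P1_contDiff c1 (by norm_num)
  have d2 : Differentiable ℝ (P1 (P1 f)) := c2.differentiable (by norm_num)
  have c3 : ContDiff ℝ 1 (P1 (P1 (P1 f))) := P1_contDiff c2 (by norm_num)
  have d3 : Differentiable ℝ (P1 (P1 (P1 f))) := c3.differentiable one_ne_zero
  set F : ℝ × ℝ × ℝ → ℝ := fun p => f (p.1 ^ 2 + p.2.1 ^ 2, p.2.2) with hF
  have e1 : Dx F = fun p => 2 * p.1 * P1 f (p.1 ^ 2 + p.2.1 ^ 2, p.2.2) := by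
    funext p; exact (slice_x d0 p.1 p.2.1 p.2.2).deriv
  have e1y : Dy F = fun p => 2 * p.2.1 * P1 f (p.1 ^ 2 + p.2.1 ^ 2, p.2.2) := by
    funext p; exact (slice_y d0 p.1 p.2.1 p.2.2).deriv
  have et : Dt F = fun p => Pw f (p.1 ^ 2 + p.2.1 ^ 2, p.2.2) := by
    funext p; exact (slice_t d0 p.1 p.2.1 p.2.2).deriv
  have e2 : Dx (Dx F) = fun p => 2 * P1 f (p.1 ^ 2 + p.2.1 ^ 2, p.2.2)
      + 4 * p.1 ^ 2 * P1 (P1 f) (p.1 ^ 2 + p.2.1 ^ 2, p.2.2) := by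
    rw [e1]; funext p
    have H : HasDerivAt (fun x : ℝ => 2 * x * P1 f (x ^ 2 + p.2.1 ^ 2, p.2.2))
        (2 * P1 f (p.1 ^ 2 + p.2.1 ^ 2, p.2.2)
          + 4 * p.1 ^ 2 * P1 (P1 f) (p.1 ^ 2 + p.2.1 ^ 2, p.2.2)) p.1 := by
      have := ((hasDerivAt_id' p.1).const_mul 2).mul (slice_x d1 p.1 p.2.1 p.2.2)
      refine this.congr_deriv ?_; ring
    exact H.deriv
  have e2y : Dy (Dy F) = fun p => 2 * P1 f (p.1 ^ 2 + p.2.1 ^ 2, p.2.2)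
      + 4 * p.2.1 ^ 2 * P1 (P1 f) (p.1 ^ 2 + p.2.1 ^ 2, p.2.2) := by
    rw [e1y]; funext p
    have H : HasDerivAt (fun y : ℝ => 2 * y * P1 f (p.1 ^ 2 + y ^ 2, p.2.2))
        (2 * P1 f (p.1 ^ 2 + p.2.1 ^ 2, p.2.2)
          + 4 * p.2.1 ^ 2 * P1 (P1 f) (p.1 ^ 2 + p.2.1 ^ 2, p.2.2)) p.2.1 := by
      have := ((hasDerivAt_id' p.2.1).const_mul 2).mul (slice_y d1 p.1 p.2.1 p.2.2)
      refine this.congr_deriv ?_; ring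
    exact H.deriv
  have e3 : Dx (Dx (Dx F)) = fun p => 12 * p.1 * P1 (P1 f) (p.1 ^ 2 + p.2.1 ^ 2, p.2.2)
      + 8 * p.1 ^ 3 * P1 (P1 (P1 f)) (p.1 ^ 2 + p.2.1 ^ 2, p.2.2) := by
    rw [e2]; funext p
    have H : HasDerivAt (fun x : ℝ => 2 * P1 f (x ^ 2 + p.2.1 ^ 2, p.2.2)
          + 4 * x ^ 2 * P1 (P1 f) (x ^ 2 + p.2.1 ^ 2, p.2.2))
        (12 * p.1 * P1 (P1 f) (p.1 ^ 2 + p.2.1 ^ 2, p.2.2)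
          + 8 * p.1 ^ 3 * P1 (P1 (P1 f)) (p.1 ^ 2 + p.2.1 ^ 2, p.2.2)) p.1 := by
      have A := (slice_x d1 p.1 p.2.1 p.2.2).const_mul 2
      have B := ((hasDerivAt_pow 2 p.1).const_mul 4).mul (slice_x d2 p.1 p.2.1 p.2.2)
      refine (A.add B).congr_deriv ?_; push_cast; ring
    exact H.deriv
  have e3y : Dy (Dy (Dy F)) = fun p => 12 * p.2.1 * P1 (P1 f) (p.1 ^ 2 + p.2.1 ^ 2, p.2.2)
      + 8 * p.2.1 ^ 3 * P1 (P1 (P1 f)) (p.1 ^ 2 + p.2.1 ^ 2, p.2.2) := by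
    rw [e2y]; funext p
    have H : HasDerivAt (fun y : ℝ => 2 * P1 f (p.1 ^ 2 + y ^ 2, p.2.2)
          + 4 * y ^ 2 * P1 (P1 f) (p.1 ^ 2 + y ^ 2, p.2.2))
        (12 * p.2.1 * P1 (P1 f) (p.1 ^ 2 + p.2.1 ^ 2, p.2.2)
          + 8 * p.2.1 ^ 3 * P1 (P1 (P1 f)) (p.1 ^ 2 + p.2.1 ^ 2, p.2.2)) p.2.1 := by
      have A := (slice_y d1 p.1 p.2.1 p.2.2).const_mul 2
      have B := ((hasDerivAt_pow 2 p.2.1).const_mul 4).mul (slice_y d2 p.1 p.2.1 p.2.2)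
      refine (A.add B).congr_deriv ?_; push_cast; ring
    exact H.deriv
  have e4 : Dx (Dx (Dx (Dx F))) = fun p => 12 * P1 (P1 f) (p.1 ^ 2 + p.2.1 ^ 2, p.2.2)
      + 48 * p.1 ^ 2 * P1 (P1 (P1 f)) (p.1 ^ 2 + p.2.1 ^ 2, p.2.2)
      + 16 * p.1 ^ 4 * P1 (P1 (P1 (P1 f))) (p.1 ^ 2 + p.2.1 ^ 2, p.2.2) := by
    rw [e3]; funext p
    have H : HasDerivAt (fun x : ℝ => 12 * x * P1 (P1 f) (x ^ 2 + p.2.1 ^ 2, p.2.2)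
          + 8 * x ^ 3 * P1 (P1 (P1 f)) (x ^ 2 + p.2.1 ^ 2, p.2.2))
        (12 * P1 (P1 f) (p.1 ^ 2 + p.2.1 ^ 2, p.2.2)
          + 48 * p.1 ^ 2 * P1 (P1 (P1 f)) (p.1 ^ 2 + p.2.1 ^ 2, p.2.2)
          + 16 * p.1 ^ 4 * P1 (P1 (P1 (P1 f))) (p.1 ^ 2 + p.2.1 ^ 2, p.2.2)) p.1 := by
      have A := ((hasDerivAt_id' p.1).const_mul 12).mul (slice_x d2 p.1 p.2.1 p.2.2)
      have B := ((hasDerivAt_pow 3 p.1).const_mul 8).mul (slice_x d3 p.1 p.2.1 p.2.2)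
      refine (A.add B).congr_deriv ?_; push_cast; ring
    exact H.deriv
  have e4y : Dy (Dy (Dy (Dy F))) = fun p => 12 * P1 (P1 f) (p.1 ^ 2 + p.2.1 ^ 2, p.2.2)
      + 48 * p.2.1 ^ 2 * P1 (P1 (P1 f)) (p.1 ^ 2 + p.2.1 ^ 2, p.2.2)
      + 16 * p.2.1 ^ 4 * P1 (P1 (P1 (P1 f))) (p.1 ^ 2 + p.2.1 ^ 2, p.2.2) := by
    rw [e3y]; funext p
    have H : HasDerivAt (fun y : ℝ => 12 * y * P1 (P1 f) (p.1 ^ 2 + y ^ 2, p.2.2)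
          + 8 * y ^ 3 * P1 (P1 (P1 f)) (p.1 ^ 2 + y ^ 2, p.2.2))
        (12 * P1 (P1 f) (p.1 ^ 2 + p.2.1 ^ 2, p.2.2)
          + 48 * p.2.1 ^ 2 * P1 (P1 (P1 f)) (p.1 ^ 2 + p.2.1 ^ 2, p.2.2)
          + 16 * p.2.1 ^ 4 * P1 (P1 (P1 (P1 f))) (p.1 ^ 2 + p.2.1 ^ 2, p.2.2)) p.2.1 := by
      have A := ((hasDerivAt_id' p.2.1).const_mul 12).mul (slice_y d2 p.1 p.2.1 p.2.2)
      have B := ((hasDerivAt_pow 3 p.2.1).const_mul 8).mul (slice_y d3 p.1 p.2.1 p.2.2)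
      refine (A.add B).congr_deriv ?_; push_cast; ring
    exact H.deriv
  have em1 : Dx (Dy (Dy F)) = fun p => 4 * p.1 * P1 (P1 f) (p.1 ^ 2 + p.2.1 ^ 2, p.2.2)
      + 8 * p.2.1 ^ 2 * p.1 * P1 (P1 (P1 f)) (p.1 ^ 2 + p.2.1 ^ 2, p.2.2) := by
    rw [e2y]; funext p
    have H : HasDerivAt (fun x : ℝ => 2 * P1 f (x ^ 2 + p.2.1 ^ 2, p.2.2)
          + 4 * p.2.1 ^ 2 * P1 (P1 f) (x ^ 2 + p.2.1 ^ 2, p.2.2))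
        (4 * p.1 * P1 (P1 f) (p.1 ^ 2 + p.2.1 ^ 2, p.2.2)
          + 8 * p.2.1 ^ 2 * p.1 * P1 (P1 (P1 f)) (p.1 ^ 2 + p.2.1 ^ 2, p.2.2)) p.1 := by
      have A := (slice_x d1 p.1 p.2.1 p.2.2).const_mul 2
      have B := (slice_x d2 p.1 p.2.1 p.2.2).const_mul (4 * p.2.1 ^ 2)
      refine (A.add B).congr_deriv ?_; ring
    exact H.deriv
  have em2 : Dx (Dx (Dy (Dy F))) = fun p => 4 * P1 (P1 f) (p.1 ^ 2 + p.2.1 ^ 2, p.2.2)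
      + (8 * p.1 ^ 2 + 8 * p.2.1 ^ 2) * P1 (P1 (P1 f)) (p.1 ^ 2 + p.2.1 ^ 2, p.2.2)
      + 16 * p.1 ^ 2 * p.2.1 ^ 2 * P1 (P1 (P1 (P1 f))) (p.1 ^ 2 + p.2.1 ^ 2, p.2.2) := by
    rw [em1]; funext p
    have H : HasDerivAt (fun x : ℝ => 4 * x * P1 (P1 f) (x ^ 2 + p.2.1 ^ 2, p.2.2)
          + 8 * p.2.1 ^ 2 * x * P1 (P1 (P1 f)) (x ^ 2 + p.2.1 ^ 2, p.2.2))
        (4 * P1 (P1 f) (p.1 ^ 2 + p.2.1 ^ 2, p.2.2)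
          + (8 * p.1 ^ 2 + 8 * p.2.1 ^ 2) * P1 (P1 (P1 f)) (p.1 ^ 2 + p.2.1 ^ 2, p.2.2)
          + 16 * p.1 ^ 2 * p.2.1 ^ 2 * P1 (P1 (P1 (P1 f))) (p.1 ^ 2 + p.2.1 ^ 2, p.2.2)) p.1 := by
      have A := ((hasDerivAt_id' p.1).const_mul 4).mul (slice_x d2 p.1 p.2.1 p.2.2)
      have B := ((hasDerivAt_id' p.1).const_mul (8 * p.2.1 ^ 2)).mul (slice_x d3 p.1 p.2.1 p.2.2)
      refine (A.add B).congr_deriv ?_; ring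
    exact H.deriv
  constructor
  · exact hf.comp (by fun_prop)
  · rintro ⟨x, y, t⟩
    have hz : (0 : ℝ) ≤ x ^ 2 + y ^ 2 := by positivity
    have hr := hred (x ^ 2 + y ^ 2, t) hz
    rw [Dz_eq d0, Dz_eq d1, Dz_eq d2, Dz_eq d3, Dw_eq d0] at hr
    dsimp only at hr
    simp only [KSLhs]
    rw [e4, em2, e4y, e2, e2y, et, e1, e1y]
    dsimp only
    linear_combination hr
end
end

section
/- Let ν, κ, λ be real constants with λ ≠ 0, and let f : ℝ × ℝ → ℝ, written f(z,w), be four times continuously differentiable and satisfy the similarity-reduced equation ∂_w f + ν·∂_z²f + κ·∂_z⁴f − λ·(∂_z f)² − ν/(2λw) = 0 at every point (z,w) with w ≠ 0. Then the function h(x,y,t) := f(y,t) − x²/(4λt) satisfies the (2+1)-dimensional Kuramoto–Sivashinsky equation at every point (x,y,t) with t ≠ 0. (This is the similarity reduction corresponding to the Galilean-boost symmetry V₆ = t∂ₓ + (x/(2λ))∂ₕ, with invariants z = y, w = t and r = h + x²/(4λt).) -/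
noncomputable section

/-- Similarity reduction for the Galilean boost V₆ = t∂ₓ + (x/(2λ))∂ₕ (invariants
z = y, w = t, r = h + x²/(4λt)): if f(z,w) is a C⁴ solution of
∂_w f + ν ∂_z²f + κ ∂_z⁴f − λ(∂_z f)² − ν/(2λw) = 0 for w ≠ 0, then
h(x,y,t) = f(y,t) − x²/(4λt) satisfies the Kuramoto–Sivashinsky equation wherever t ≠ 0. -/
theorem ks_similarity_reduction_V6 (ν κ lam : ℝ) (hlam : lam ≠ 0) (f : ℝ × ℝ → ℝ)
    (hf : ContDiff ℝ 4 f)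
    (hred : ∀ q : ℝ × ℝ, q.2 ≠ 0 →
      Dw f q + ν * Dz (Dz f) q + κ * Dz (Dz (Dz (Dz f))) q - lam * (Dz f q) ^ 2
        - ν / (2 * lam * q.2) = 0) :
    ∀ p : ℝ × ℝ × ℝ, p.2.2 ≠ 0 →
      KSLhs ν κ lam
        (fun p : ℝ × ℝ × ℝ => f (p.2.1, p.2.2) - p.1 ^ 2 / (4 * lam * p.2.2)) p = 0 := by
  intro p hp
  set h : ℝ × ℝ × ℝ → ℝ :=
    fun p : ℝ × ℝ × ℝ => f (p.2.1, p.2.2) - p.1 ^ 2 / (4 * lam * p.2.2) with hh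
  have hdiff : Differentiable ℝ f := hf.differentiable (by norm_num)
  -- x-derivatives
  have hDx : Dx h = fun q => -(2 * q.1) / (4 * lam * q.2.2) := by
    funext q
    simp only [Dx, hh, deriv_const_sub, deriv_div_const, deriv_pow_field]
    ring
  have hDxx : Dx (Dx h) = fun q => -2 / (4 * lam * q.2.2) := by
    funext q
    rw [hDx]
    simp only [Dx]
    have : (fun x : ℝ => -(2 * x) / (4 * lam * q.2.2))
        = fun x : ℝ => (-2 / (4 * lam * q.2.2)) * x := by funext x; ring
    rw [this, deriv_const_mul_field]
    simp
  have hDxxx : Dx (Dx (Dx h)) = fun _ => 0 := by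
    funext q
    rw [hDxx]
    simp [Dx]
  have hDx4 : Dx (Dx (Dx (Dx h))) = fun _ => 0 := by
    rw [hDxxx]; funext q; simp [Dx]
  -- y-derivatives
  have hDy : Dy h = fun q => Dz f (q.2.1, q.2.2) := by
    funext q
    simp only [Dy, hh, deriv_sub_const]
    rfl
  have hDyy : Dy (Dy h) = fun q => Dz (Dz f) (q.2.1, q.2.2) := by
    rw [hDy]; rfl
  have hDy4 : Dy (Dy (Dy (Dy h))) = fun q => Dz (Dz (Dz (Dz f))) (q.2.1, q.2.2) := by
    rw [hDyy]; rfl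
  have hDxyy : Dx (Dx (Dy (Dy h))) = fun _ => 0 := by
    rw [hDyy]
    have : Dx (fun q : ℝ × ℝ × ℝ => Dz (Dz f) (q.2.1, q.2.2)) = fun _ => 0 := by
      funext q; simp [Dx]
    rw [this]; funext q; simp [Dx]
  -- t-derivative at p
  obtain ⟨x, y, t⟩ := p
  simp only at hp
  have hDt : Dt h (x, y, t) = Dw f (y, t) + x ^ 2 / (4 * lam * t ^ 2) := by
    simp only [Dt, hh]
    have d1 : DifferentiableAt ℝ (fun s : ℝ => f (y, s)) t :=
      (hdiff (y, t)).comp t (DifferentiableAt.prodMk (differentiableAt_const y) differentiableAt_id)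
    have d2 : DifferentiableAt ℝ (fun s : ℝ => x ^ 2 / (4 * lam * s)) t := by
      have : (fun s : ℝ => x ^ 2 / (4 * lam * s)) = fun s : ℝ => (x ^ 2 / (4 * lam)) * s⁻¹ := by
        funext s; by_cases hs : s = 0 <;> field_simp
      rw [this]
      exact (differentiableAt_inv hp).const_mul _
    rw [deriv_fun_sub d1 d2]
    have e2 : deriv (fun s : ℝ => x ^ 2 / (4 * lam * s)) t = -(x ^ 2 / (4 * lam * t ^ 2)) := by
      have : (fun s : ℝ => x ^ 2 / (4 * lam * s)) = fun s : ℝ => (x ^ 2 / (4 * lam)) * s⁻¹ := by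
        funext s; by_cases hs : s = 0 <;> field_simp
      rw [this, deriv_const_mul _ (differentiableAt_inv hp), deriv_inv]
      field_simp
    rw [e2]
    have : deriv (fun s : ℝ => f (y, s)) t = Dw f (y, t) := rfl
    rw [this]; ring
  -- assemble
  have key := hred (y, t) hp
  simp only [KSLhs]
  rw [hDt, hDx4, hDxyy, hDy4, hDxx, hDyy, hDx, hDy]
  have hcancel : lam * (-(2 * x) / (4 * lam * t)) ^ 2 = x ^ 2 / (4 * lam * t ^ 2) := by
    field_simp; ring
  linear_combination key - hcancel
end
end
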